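/- arXiv:2003.10832 — 3 statements merged into one kernel-verified Lean document; each statement's English description precedes it below -/
import Mathlib

section
/- Let a ∈ (0,∞), let P be a finite subset of (0,a), and let S : ℝ → ℝ satisfy: (S2) 0 < S(x) < x for x ∈ (0,a); (S3) S ∈ C([0,a]) ∩ C¹([0,a)) ∩ C²([0,a) \ P) with S(0) = 0, S'(0) = 1 and S(a) = 0; (S4) S'(x)² − S''(x)·S(x) ≥ 1 for x ∈ [0,a) \ P. Suppose moreover that the limit d := lim_{x→0⁺} S''(x)/x exists and satisfies −∞ < d < 0. Then a² < −12/d, and for all x ∈ (0,a), (a² − x²)/(a² + x²) < S(x)/x < (12 + d x²)/(12 − d x²). -/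
open Real Set Filter

private lemma redheffer_glue {f : ℝ → ℝ} {p t q : ℝ} (hpt : p ≤ t) (htq : t ≤ q)
    (h1 : StrictMonoOn f (Icc p t)) (h2 : StrictMonoOn f (Icc t q)) :
    StrictMonoOn f (Icc p q) := by
  intro x hx y hy hxy
  rcases le_total y t with h | h
  · exact h1 ⟨hx.1, hxy.le.trans h⟩ ⟨hy.1, h⟩ hxy
  · rcases le_total x t with h' | h'
    · rcases eq_or_lt_of_le h' with rfl | h''
      · exact h2 ⟨le_rfl, htq⟩ ⟨h, hy.2⟩ hxy
      · have hft : f x < f t := h1 ⟨hx.1, h'⟩ ⟨hpt, le_rfl⟩ h''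
        rcases eq_or_lt_of_le h with rfl | h3
        · exact hft
        · exact hft.trans (h2 ⟨le_rfl, htq⟩ ⟨h, hy.2⟩ h3)
    · exact h2 ⟨h', hx.2⟩ ⟨h, hy.2⟩ hxy

private lemma redheffer_strictMonoOn_finite (T : Finset ℝ) :
    ∀ {f : ℝ → ℝ} {p q : ℝ}, p < q → ContinuousOn f (Icc p q) →
      (∀ x ∈ Ioo p q, x ∉ T → 0 < deriv f x) → StrictMonoOn f (Icc p q) := by
  classical
  induction T using Finset.induction_on with
  | empty =>
    intro f p q hpq hc hd
    refine strictMonoOn_of_deriv_pos (convex_Icc p q) hc ?_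
    intro x hx
    rw [interior_Icc] at hx
    exact hd x hx (Finset.notMem_empty x)
  | @insert t T' htT' IH =>
    intro f p q hpq hc hd
    by_cases ht : t ∈ Ioo p q
    · have h1 : StrictMonoOn f (Icc p t) := by
        refine IH ht.1 (hc.mono (Icc_subset_Icc le_rfl ht.2.le)) ?_
        intro x hx hxT
        refine hd x ⟨hx.1, hx.2.trans ht.2⟩ ?_
        simp only [Finset.mem_insert, not_or]
        exact ⟨ne_of_lt hx.2, hxT⟩
      have h2 : StrictMonoOn f (Icc t q) := by
        refine IH ht.2 (hc.mono (Icc_subset_Icc ht.1.le le_rfl)) ?_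
        intro x hx hxT
        refine hd x ⟨ht.1.trans hx.1, hx.2⟩ ?_
        simp only [Finset.mem_insert, not_or]
        exact ⟨ne_of_gt hx.1, hxT⟩
      exact redheffer_glue ht.1.le ht.2.le h1 h2
    · refine IH hpq hc ?_
      intro x hx hxT
      refine hd x hx ?_
      simp only [Finset.mem_insert, not_or]
      refine ⟨?_, hxT⟩
      rintro rfl
      exact ht hx

set_option maxHeartbeats 1000000 in
/-- Two-sided Redheffer estimate: under (S2)–(S4) (with `S(0) = 0`, `S'(0) = 1`,
`S(a) = 0`), if `d = lim_{x→0⁺} S''(x)/x` exists with `−∞ < d < 0`, then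
`a² < −12/d` and `(a² − x²)/(a² + x²) < S(x)/x < (12 + dx²)/(12 − dx²)` on `(0,a)`. -/
theorem redheffer_two_sided (a : ℝ) (ha : 0 < a) (P : Set ℝ) (hPfin : P.Finite)
    (hPsub : P ⊆ Ioo 0 a) (S : ℝ → ℝ)
    (hS2 : ∀ x ∈ Ioo 0 a, 0 < S x ∧ S x < x)
    (hS3 : ContinuousOn S (Icc 0 a) ∧ ContDiffOn ℝ 1 S (Ico 0 a) ∧
      ContDiffOn ℝ 2 S (Ico 0 a \ P))
    (hS0 : S 0 = 0) (hS'0 : deriv S 0 = 1) (hSa : S a = 0)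
    (hS4 : ∀ x ∈ Ico 0 a \ P, (deriv S x) ^ 2 - deriv (deriv S) x * S x ≥ 1)
    (d : ℝ) (hd : d < 0)
    (hlim : Filter.Tendsto (fun x => deriv (deriv S) x / x)
      (nhdsWithin 0 (Ioi 0)) (nhds d)) :
    a ^ 2 < -12 / d ∧
      ∀ x ∈ Ioo 0 a,
        (a ^ 2 - x ^ 2) / (a ^ 2 + x ^ 2) < S x / x ∧
          S x / x < (12 + d * x ^ 2) / (12 - d * x ^ 2) := by
  classical
  obtain ⟨hScont, hC1, hC2⟩ := hS3
  set e : ℝ := -d with he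
  have he0 : 0 < e := by simp only [he]; linarith
  -- differentiability of S at 0
  have hdiff0 : DifferentiableAt ℝ S 0 := by
    by_contra h
    rw [deriv_zero_of_not_differentiableAt h] at hS'0
    norm_num at hS'0
  -- `Ico 0 a` is a neighborhood of interior points
  have hIcoNhds : ∀ x ∈ Ioo 0 a, Ico 0 a ∈ nhds x := fun x hx =>
    Filter.mem_of_superset (isOpen_Ioo.mem_nhds hx) Ioo_subset_Ico_self
  -- F1 : derivative of S at interior points
  have F1 : ∀ x ∈ Ioo 0 a, HasDerivAt S (deriv S x) x := fun x hx =>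
    ((hC1.contDiffAt (hIcoNhds x hx)).differentiableAt one_ne_zero).hasDerivAt
  -- derivWithin = deriv on Ico 0 a
  have hEq : ∀ x ∈ Ico 0 a, derivWithin S (Ico 0 a) x = deriv S x := by
    intro x hx
    rcases eq_or_lt_of_le hx.1 with h0 | h0
    · rw [← h0]
      exact hdiff0.derivWithin ((uniqueDiffOn_Ico 0 a) 0 ⟨le_rfl, ha⟩)
    · exact derivWithin_of_mem_nhds (hIcoNhds x ⟨h0, hx.2⟩)
  -- F2 : continuity of deriv S on Ico 0 a
  have F2 : ContinuousOn (deriv S) (Ico 0 a) := by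
    have h0 : ContDiffOn ℝ 0 (derivWithin S (Ico 0 a)) (Ico 0 a) :=
      hC1.derivWithin (uniqueDiffOn_Ico 0 a) (by norm_num)
    exact h0.continuousOn.congr fun x hx => (hEq x hx).symm
  -- an initial interval free of P
  obtain ⟨ε, hε0, hεa, hεP⟩ : ∃ ε, 0 < ε ∧ ε ≤ a ∧ ∀ p ∈ P, ε ≤ p := by
    rcases Set.eq_empty_or_nonempty P with hP | hP
    · exact ⟨a, ha, le_rfl, by simp [hP]⟩
    · have hne : hPfin.toFinset.Nonempty := by
        rwa [Set.Finite.toFinset_nonempty]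
      have hmP : hPfin.toFinset.min' hne ∈ P := by
        have := hPfin.toFinset.min'_mem hne
        rwa [Set.Finite.mem_toFinset] at this
      exact ⟨hPfin.toFinset.min' hne, (hPsub hmP).1, (hPsub hmP).2.le,
        fun p hp => hPfin.toFinset.min'_le p (by rwa [Set.Finite.mem_toFinset])⟩
  -- F3 : second derivative at interior points off P
  have hUopen : IsOpen (Ioo 0 a \ P) := isOpen_Ioo.sdiff (hPfin.isClosed)
  have hC2' : ContDiffOn ℝ 2 S (Ioo 0 a \ P) :=
    hC2.mono (diff_subset_diff_left Ioo_subset_Ico_self)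
  have hderiv2 : ContDiffOn ℝ 1 (deriv S) (Ioo 0 a \ P) :=
    hC2'.deriv_of_isOpen hUopen (by norm_num)
  have F3 : ∀ x ∈ Ioo 0 a \ P, HasDerivAt (deriv S) (deriv (deriv S) x) x := fun x hx =>
    ((hderiv2.contDiffAt (hUopen.mem_nhds hx)).differentiableAt one_ne_zero).hasDerivAt
  -- F4 : deriv S tends to 1 at 0⁺
  have hIooIoi : nhdsWithin (0:ℝ) (Ioi 0) = nhdsWithin 0 (Ioo 0 a) :=
    (nhdsWithin_Ioo_eq_nhdsGT ha).symm
  have F4 : Tendsto (deriv S) (nhdsWithin 0 (Ioi 0)) (nhds 1) := by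
    have h0m : (0:ℝ) ∈ Ico 0 a := ⟨le_rfl, ha⟩
    have h : Tendsto (deriv S) (nhdsWithin 0 (Ico 0 a)) (nhds (deriv S 0)) :=
      (F2 0 h0m).tendsto
    have h' : Tendsto (deriv S) (nhdsWithin 0 (Ico 0 a)) (nhds 1) := by
      rwa [hS'0] at h
    rw [hIooIoi]
    exact h'.mono_left (nhdsWithin_mono 0 Ioo_subset_Ico_self)
  -- F5 : S x / x tends to 1 at 0⁺
  have F5 : Tendsto (fun x => S x / x) (nhdsWithin 0 (Ioi 0)) (nhds 1) := by
    have h : HasDerivAt S 1 0 := by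
      have := hdiff0.hasDerivAt
      rwa [hS'0] at this
    have hslope := hasDerivAt_iff_tendsto_slope.mp h
    have hsub : nhdsWithin (0:ℝ) (Ioi 0) ≤ nhdsWithin 0 {(0:ℝ)}ᶜ :=
      nhdsWithin_mono 0 (fun x hx => ne_of_gt hx)
    refine (hslope.mono_left hsub).congr ?_
    intro x
    simp [slope_def_field, hS0, div_eq_div_iff]
  -- F6 : S tends to 0 at 0⁺
  have F6 : Tendsto S (nhdsWithin 0 (Ioi 0)) (nhds 0) := by
    have h : Tendsto S (nhdsWithin 0 (Icc 0 a)) (nhds (S 0)) :=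
      (hScont 0 ⟨le_rfl, ha.le⟩).tendsto
    have h' : Tendsto S (nhdsWithin 0 (Icc 0 a)) (nhds 0) := by
      rwa [hS0] at h
    rw [hIooIoi]
    exact h'.mono_left (nhdsWithin_mono 0 Ioo_subset_Icc_self)
  -- the auxiliary function M
  set M : ℝ → ℝ := fun x => S x ^ 2 + x * S x - x ^ 2 - x ^ 2 * deriv S x with hM
  -- derivative of M off P
  have hMderiv : ∀ x ∈ Ioo 0 a \ P, HasDerivAt M
      (2 * S x * deriv S x + (S x + x * deriv S x) - 2 * x
        - (2 * x * deriv S x + x ^ 2 * deriv (deriv S) x)) x := by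
    intro x hx
    have h1 := F1 x hx.1
    have h2 := F3 x hx
    have hA : HasDerivAt (fun y => S y ^ 2) (2 * S x * deriv S x) x := by
      have := h1.pow 2
      norm_num at this
      exact this
    have hB : HasDerivAt (fun y => y * S y) (S x + x * deriv S x) x := by
      have := (hasDerivAt_id x).mul h1
      exact this.congr_deriv (by simp only [id_eq, one_mul])
    have hC : HasDerivAt (fun y : ℝ => y ^ 2) (2 * x) x := by
      simpa using hasDerivAt_pow 2 x
    have hD : HasDerivAt (fun y => y ^ 2 * deriv S y)
        (2 * x * deriv S x + x ^ 2 * deriv (deriv S) x) x := by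
      have := hC.mul h2
      exact this
    exact ((hA.add hB).sub hC).sub hD
  -- continuity of M on Ico 0 a
  have hMcont : ContinuousOn M (Ico 0 a) := by
    have hS' : ContinuousOn S (Ico 0 a) := hScont.mono Ico_subset_Icc_self
    have hid : ContinuousOn (fun y : ℝ => y) (Ico 0 a) := continuous_id.continuousOn
    have hpow : ContinuousOn (fun y : ℝ => y ^ 2) (Ico 0 a) := (continuous_pow 2).continuousOn
    exact (((hS'.pow 2).add (hid.mul hS')).sub hpow).sub (hpow.mul F2)
  -- positivity of the derivative of M / S where S' > -1
  have hPhi : ∀ x ∈ Ioo 0 a \ P, -1 < deriv S x → 0 < deriv (fun y => M y / S y) x := by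
    intro x hx hx1
    have hSx := hS2 x hx.1
    have h1 := F1 x hx.1
    have hMd := hMderiv x hx
    have hq := hMd.div h1 (ne_of_gt hSx.1)
    rw [show (fun y => M y / S y) = M / S from rfl, hq.deriv]
    have h4 : (deriv S x) ^ 2 - deriv (deriv S) x * S x ≥ 1 :=
      hS4 x ⟨⟨hx.1.1.le, hx.1.2⟩, hx.2⟩
    have hx0 : 0 < x := hx.1.1
    apply div_pos ?_ (pow_pos hSx.1 2)
    have hkey : (2 * S x * deriv S x + (S x + x * deriv S x) - 2 * x
          - (2 * x * deriv S x + x ^ 2 * deriv (deriv S) x)) * S x - M x * deriv S x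
        = x ^ 2 * ((deriv S x) ^ 2 - deriv (deriv S) x * S x - 1)
          + (1 + deriv S x) * (x - S x) ^ 2 := by
      simp only [hM]
      ring
    rw [hkey]
    have ht1 : 0 ≤ x ^ 2 * ((deriv S x) ^ 2 - deriv (deriv S) x * S x - 1) := by
      apply mul_nonneg (sq_nonneg x)
      linarith
    have ht2 : 0 < (1 + deriv S x) * (x - S x) ^ 2 := by
      apply mul_pos (by linarith)
      have : 0 < x - S x := by linarith [hSx.2]
      positivity
    linarith
  -- monotonicity of M / S on subintervals where S' > -1
  have hMono : ∀ p q : ℝ, 0 < p → p < q → q < a → (∀ x ∈ Ioo p q, -1 < deriv S x) →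
      StrictMonoOn (fun y => M y / S y) (Icc p q) := by
    intro p q hp hpq hqa hgt
    have hsub : Icc p q ⊆ Ioo 0 a := fun y hy => ⟨lt_of_lt_of_le hp hy.1, lt_of_le_of_lt hy.2 hqa⟩
    refine redheffer_strictMonoOn_finite hPfin.toFinset hpq ?_ ?_
    · refine ContinuousOn.div (hMcont.mono ?_) (hScont.mono ?_) ?_
      · exact fun y hy => Ioo_subset_Ico_self (hsub hy)
      · exact fun y hy => Ioo_subset_Icc_self (hsub hy)
      · exact fun y hy => ne_of_gt (hS2 y (hsub hy)).1
    · intro x hx hxT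
      have hxP : x ∉ P := by rwa [Set.Finite.mem_toFinset] at hxT
      exact hPhi x ⟨hsub (Ioo_subset_Icc_self hx), hxP⟩ (hgt x hx)
  -- limit of M / S at 0⁺
  have hPhi0 : Tendsto (fun y => M y / S y) (nhdsWithin 0 (Ioi 0)) (nhds 0) := by
    have hfac1 : Tendsto (fun y => (S y / y) ^ 2 + S y / y - 1 - deriv S y)
        (nhdsWithin 0 (Ioi 0)) (nhds 0) := by
      have hc1 : Tendsto (fun _ : ℝ => (1:ℝ)) (nhdsWithin (0:ℝ) (Ioi 0)) (nhds 1) :=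
        tendsto_const_nhds
      have h := (((F5.pow 2).add F5).sub hc1).sub F4
      have : ((1:ℝ) ^ 2 + 1 - 1 - 1) = 0 := by norm_num
      rwa [this] at h
    have hy : Tendsto (fun y : ℝ => y) (nhdsWithin (0:ℝ) (Ioi 0)) (nhds 0) :=
      tendsto_id.mono_left nhdsWithin_le_nhds
    have hfac2 : Tendsto (fun y => y / (S y / y)) (nhdsWithin 0 (Ioi 0)) (nhds 0) := by
      have h := hy.div F5 one_ne_zero
      rw [zero_div] at h
      exact h
    have hprod := hfac1.mul hfac2
    rw [mul_zero] at hprod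
    refine hprod.congr' ?_
    filter_upwards [Ioo_mem_nhdsGT_of_mem (show (0:ℝ) ∈ Ico 0 a from ⟨le_rfl, ha⟩)] with y hy'
    have hy0 : (0:ℝ) < y := hy'.1
    have hSy := hS2 y hy'
    simp only [hM]
    field_simp [hy0.ne', hSy.1.ne']
  -- M is positive on (0, a)
  have hMpos : ∀ x₀ ∈ Ioo 0 a, 0 < M x₀ := by
    intro x₀ hx₀
    have hSx₀ := hS2 x₀ hx₀
    have hx₀0 : 0 < x₀ := hx₀.1
    rcases le_or_gt (deriv S x₀) (-1) with h1 | h1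
    · have hmul : x₀ ^ 2 * deriv S x₀ ≤ x₀ ^ 2 * (-1) :=
        mul_le_mul_of_nonneg_left h1 (sq_nonneg x₀)
      simp only [hM]
      nlinarith [hSx₀.1, hSx₀.2, sq_nonneg (S x₀)]
    · -- the set of "bad" points below x₀
      set A : Set ℝ := insert (0:ℝ) {x ∈ Icc 0 x₀ | deriv S x ≤ -1} with hA
      have hA0 : (0:ℝ) ∈ A := mem_insert _ _
      have hAne : A.Nonempty := ⟨0, hA0⟩
      have hAsub : A ⊆ Icc 0 x₀ := by
        rintro y (rfl | hy)
        · exact ⟨le_rfl, hx₀0.le⟩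
        · exact hy.1
      have hIccsub : Icc (0:ℝ) x₀ ⊆ Ico 0 a := fun y hy => ⟨hy.1, lt_of_le_of_lt hy.2 hx₀.2⟩
      have hAclosed : IsClosed A := by
        rw [hA, Set.insert_eq]
        apply IsClosed.union isClosed_singleton
        have : {x ∈ Icc 0 x₀ | deriv S x ≤ -1} = Icc 0 x₀ ∩ deriv S ⁻¹' (Iic (-1)) := by
          ext y; simp [Set.mem_sep_iff]
        rw [this]
        exact (F2.mono hIccsub).preimage_isClosed_of_isClosed isClosed_Icc isClosed_Iic
      have hAcomp : IsCompact A := IsCompact.of_isClosed_subset isCompact_Icc hAclosed hAsub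
      set α := sSup A with hαdef
      have hαA : α ∈ A := hAcomp.sSup_mem hAne
      have hα0 : 0 ≤ α := le_csSup hAcomp.bddAbove hA0
      have hαx₀ : α ≤ x₀ := csSup_le hAne fun y hy => (hAsub hy).2
      have hαlt : α < x₀ := by
        rcases eq_or_lt_of_le hαx₀ with heq | h
        · exfalso
          rcases hαA with h' | h'
          · rw [heq] at h'; exact absurd h' (ne_of_gt hx₀0)
          · rw [heq] at h'; linarith [h'.2]
        · exact h
      have hgt : ∀ x, α < x → x ≤ x₀ → -1 < deriv S x := by
        intro x hax hxx₀
        by_contra hle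
        push_neg at hle
        have hxA : x ∈ A := Or.inr ⟨⟨le_trans hα0 hax.le, hxx₀⟩, hle⟩
        exact absurd (le_csSup hAcomp.bddAbove hxA) (not_le.mpr hax)
      have hΦx₀pos : 0 < M x₀ / S x₀ := by
        rcases eq_or_lt_of_le hα0 with hαz | hαz
        · -- α = 0 : use the limit of M/S at 0⁺
          have hmono2 : StrictMonoOn (fun y => M y / S y) (Icc (x₀/2) x₀) := by
            refine hMono (x₀/2) x₀ (by linarith) (by linarith) hx₀.2 ?_
            intro x hxm
            exact hgt x (by rw [← hαz]; linarith [hxm.1]) hxm.2.le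
          have h2 : M (x₀/2) / S (x₀/2) < M x₀ / S x₀ :=
            hmono2 ⟨le_rfl, by linarith⟩ ⟨by linarith, le_rfl⟩ (by linarith)
          have h3 : 0 ≤ M (x₀/2) / S (x₀/2) := by
            refine le_of_tendsto hPhi0 ?_
            filter_upwards [Ioo_mem_nhdsGT_of_mem
              (show (0:ℝ) ∈ Ico 0 (x₀/2) from ⟨le_rfl, by linarith⟩)] with y hy'
            have hmono3 : StrictMonoOn (fun z => M z / S z) (Icc y x₀) := by
              refine hMono y x₀ hy'.1 (by linarith [hy'.2]) hx₀.2 ?_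
              intro z hz
              exact hgt z (by rw [← hαz]; linarith [hy'.1, hz.1]) hz.2.le
            exact le_of_lt (hmono3 ⟨le_rfl, by linarith [hy'.2]⟩
              ⟨by linarith [hy'.2], by linarith⟩ hy'.2)
          linarith
        · -- α > 0 : M is positive at α since S'(α) ≤ -1
          have hαle : deriv S α ≤ -1 := by
            rcases hαA with h' | h'
            · exfalso; rw [← h'] at hαz; exact lt_irrefl _ hαz
            · exact h'.2
          have hαIoo : α ∈ Ioo 0 a := ⟨hαz, lt_trans hαlt hx₀.2⟩
          have hSα := hS2 α hαIoo
          have hMα : 0 < M α := by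
            have hmul : α ^ 2 * deriv S α ≤ α ^ 2 * (-1) :=
              mul_le_mul_of_nonneg_left hαle (sq_nonneg α)
            simp only [hM]
            nlinarith [hSα.1, hSα.2]
          have hmono4 : StrictMonoOn (fun y => M y / S y) (Icc α x₀) := by
            refine hMono α x₀ hαz hαlt hx₀.2 ?_
            intro x hxm
            exact hgt x hxm.1 hxm.2.le
          have h5 : M α / S α < M x₀ / S x₀ :=
            hmono4 ⟨le_rfl, hαlt.le⟩ ⟨hαlt.le, le_rfl⟩ hαlt
          have h6 : 0 < M α / S α := div_pos hMα hSα.1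
          linarith
      have := mul_pos hΦx₀pos hSx₀.1
      rwa [div_mul_cancel₀ _ (ne_of_gt hSx₀.1)] at this
  -- the function f and its derivative
  set f : ℝ → ℝ := fun x => x ^ 2 * (x + S x) / (x - S x) with hf
  have hfderiv : ∀ x ∈ Ioo 0 a, HasDerivAt f (-2 * x * M x / (x - S x) ^ 2) x := by
    intro x hx
    have h1 := F1 x hx
    have hSx := hS2 x hx
    have hne : x - S x ≠ 0 := ne_of_gt (by linarith [hSx.2])
    have hnum : HasDerivAt (fun y => y ^ 2 * (y + S y))
        (2 * x * (x + S x) + x ^ 2 * (1 + deriv S x)) x := by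
      have hp : HasDerivAt (fun y : ℝ => y ^ 2) (2 * x) x := by
        simpa using hasDerivAt_pow 2 x
      have := hp.mul ((hasDerivAt_id x).add h1)
      exact this
    have hden : HasDerivAt (fun y => y - S y) (1 - deriv S x) x := (hasDerivAt_id x).sub h1
    have hq := hnum.div hden hne
    have hfeq : f = fun y => y ^ 2 * (y + S y) / (y - S y) := hf
    rw [hfeq]
    refine hq.congr_deriv ?_
    rw [div_eq_div_iff (pow_ne_zero 2 hne) (pow_ne_zero 2 hne)]
    simp only [hM]
    ring
  -- f is strictly decreasing on (0, a]
  have hanti : StrictAntiOn f (Ioc 0 a) := by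
    apply strictAntiOn_of_deriv_neg (convex_Ioc 0 a)
    · have hIoc : Ioc (0:ℝ) a ⊆ Icc 0 a := Ioc_subset_Icc_self
      refine ContinuousOn.div ?_ ?_ ?_
      · exact ((continuous_pow 2).continuousOn).mul
          (continuous_id.continuousOn.add (hScont.mono hIoc))
      · exact continuous_id.continuousOn.sub (hScont.mono hIoc)
      · intro x hx
        rcases eq_or_lt_of_le hx.2 with rfl | hxa
        · rw [hSa]; simpa using ne_of_gt hx.1
        · exact ne_of_gt (by linarith [(hS2 x ⟨hx.1, hxa⟩).2])
    · intro x hx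
      rw [interior_Ioc] at hx
      rw [(hfderiv x hx).deriv]
      have hMx := hMpos x hx
      have hSx := hS2 x hx
      have hx0 : 0 < x := hx.1
      apply div_neg_of_neg_of_pos
      · nlinarith
      · have : 0 < x - S x := by linarith [hSx.2]
        positivity
  -- l'Hôpital, step 2 : (1 - S') / (3x²) → e/6
  have hL2 : Tendsto (fun x => (1 - deriv S x) / (3 * x ^ 2))
      (nhdsWithin 0 (Ioi 0)) (nhds (e / 6)) := by
    have hmem : Ioo (0:ℝ) ε ∈ nhdsWithin (0:ℝ) (Ioi 0) :=
      Ioo_mem_nhdsGT_of_mem ⟨le_rfl, hε0⟩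
    have hIooU : ∀ x ∈ Ioo (0:ℝ) ε, x ∈ Ioo 0 a \ P := by
      intro x hx
      refine ⟨⟨hx.1, lt_of_lt_of_le hx.2 hεa⟩, fun hp => ?_⟩
      exact absurd (hεP x hp) (not_le.mpr hx.2)
    apply HasDerivAt.lhopital_zero_nhdsGT
      (f' := fun x => -(deriv (deriv S) x)) (g' := fun x => 6 * x)
    · filter_upwards [hmem] with x hx
      have h := (hasDerivAt_const x (1:ℝ)).sub (F3 x (hIooU x hx))
      exact h.congr_deriv (by simp)
    · filter_upwards [hmem] with x hx
      have hp : HasDerivAt (fun y : ℝ => y ^ 2) (2 * x) x := by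
        simpa using hasDerivAt_pow 2 x
      have := hp.const_mul 3
      exact this.congr_deriv (by ring)
    · filter_upwards [self_mem_nhdsWithin] with x hx
      have : (0:ℝ) < x := hx
      positivity
    · have hc1 : Tendsto (fun _ : ℝ => (1:ℝ)) (nhdsWithin (0:ℝ) (Ioi 0)) (nhds 1) :=
        tendsto_const_nhds
      have h := hc1.sub F4
      simpa using h
    · have h : Tendsto (fun x : ℝ => 3 * x ^ 2) (nhds 0) (nhds 0) := by
        have hcont : Continuous fun x : ℝ => (3:ℝ) * x ^ 2 :=
          continuous_const.mul (continuous_pow 2)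
        have := hcont.tendsto (0:ℝ)
        simpa using this
      exact h.mono_left nhdsWithin_le_nhds
    · have h : Tendsto (fun x => -(deriv (deriv S) x / x) / 6)
          (nhdsWithin 0 (Ioi 0)) (nhds (e / 6)) := by
        have := (hlim.neg).div_const 6
        simpa [he] using this
      refine h.congr' ?_
      filter_upwards [self_mem_nhdsWithin] with x hx
      have hx0 : (0:ℝ) < x := hx
      simp only [div_eq_mul_inv, mul_inv, neg_mul]
      ring
  -- l'Hôpital, step 1 : (x - S x) / x³ → e/6
  have hL1 : Tendsto (fun x => (x - S x) / x ^ 3) (nhdsWithin 0 (Ioi 0)) (nhds (e / 6)) := by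
    have hmem : Ioo (0:ℝ) a ∈ nhdsWithin (0:ℝ) (Ioi 0) :=
      Ioo_mem_nhdsGT_of_mem ⟨le_rfl, ha⟩
    apply HasDerivAt.lhopital_zero_nhdsGT
      (f' := fun x => 1 - deriv S x) (g' := fun x => 3 * x ^ 2)
    · filter_upwards [hmem] with x hx
      exact (hasDerivAt_id x).sub (F1 x hx)
    · filter_upwards [hmem] with x hx
      have h3 : HasDerivAt (fun y : ℝ => y ^ 3) (3 * x ^ 2) x := by
        simpa using hasDerivAt_pow 3 x
      exact h3
    · filter_upwards [self_mem_nhdsWithin] with x hx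
      have : (0:ℝ) < x := hx
      positivity
    · have hxid : Tendsto (fun x : ℝ => x) (nhdsWithin (0:ℝ) (Ioi 0)) (nhds 0) :=
        tendsto_id.mono_left nhdsWithin_le_nhds
      have h := hxid.sub F6
      simpa using h
    · have h : Tendsto (fun x : ℝ => x ^ 3) (nhds 0) (nhds 0) := by
        have := (continuous_pow 3).tendsto (0:ℝ)
        simpa using this
      exact h.mono_left nhdsWithin_le_nhds
    · exact hL2
  -- hence x³/(x - S x) → 6/e
  have hL1' : Tendsto (fun x => x ^ 3 / (x - S x)) (nhdsWithin 0 (Ioi 0)) (nhds (6 / e)) := by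
    have h := hL1.inv₀ (by positivity)
    simpa [inv_div] using h
  -- the limit of f at 0⁺ is 12/e
  have hflim : Tendsto f (nhdsWithin 0 (Ioi 0)) (nhds (12 / e)) := by
    have hu : Tendsto (fun x => 1 + S x / x) (nhdsWithin 0 (Ioi 0)) (nhds 2) := by
      have hc1 : Tendsto (fun _ : ℝ => (1:ℝ)) (nhdsWithin (0:ℝ) (Ioi 0)) (nhds 1) :=
        tendsto_const_nhds
      have h := hc1.add F5
      have h12 : (1:ℝ) + 1 = 2 := by norm_num
      rwa [h12] at h
    have hprod := hu.mul hL1'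
    have hval : (2:ℝ) * (6 / e) = 12 / e := by ring
    rw [hval] at hprod
    refine hprod.congr' ?_
    filter_upwards [Ioo_mem_nhdsGT_of_mem (show (0:ℝ) ∈ Ico 0 a from ⟨le_rfl, ha⟩)] with x hx
    have hx0 : 0 < x := hx.1
    have hSx := hS2 x hx
    have hne : x - S x ≠ 0 := ne_of_gt (by linarith [hSx.2])
    simp only [hf]
    field_simp
  -- value of f at a
  have hfa : f a = a ^ 2 := by
    show a ^ 2 * (a + S a) / (a - S a) = a ^ 2
    rw [hSa]
    rw [add_zero, sub_zero]
    field_simp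
  -- f is bounded by 12/e on (0, a]
  have hkey : ∀ x ∈ Ioc 0 a, f x ≤ 12 / e := by
    intro x hx
    refine ge_of_tendsto hflim ?_
    filter_upwards [Ioo_mem_nhdsGT_of_mem (show (0:ℝ) ∈ Ico 0 x from ⟨le_rfl, hx.1⟩)] with y hy
    exact (hanti ⟨hy.1, hy.2.le.trans hx.2⟩ hx hy.2).le
  have ha2 : a ^ 2 < 12 / e := by
    have h1 : f a < f (a / 2) :=
      hanti ⟨half_pos ha, by linarith⟩ ⟨ha, le_rfl⟩ (by linarith)
    have h2 := hkey (a / 2) ⟨half_pos ha, by linarith⟩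
    rw [hfa] at h1
    linarith
  have hd' : -12 / d = 12 / e := by
    rw [he, div_neg, neg_div]
  constructor
  · rw [hd']
    exact ha2
  · intro x hx
    have hx0 : 0 < x := hx.1
    obtain ⟨hS0x, hSxx⟩ := hS2 x hx
    have hxS : 0 < x - S x := by linarith
    have hfx_lt : f x < 12 / e := by
      have h1 : f x < f (x / 2) :=
        hanti ⟨half_pos hx0, by linarith [hx.2]⟩ ⟨hx0, hx.2.le⟩ (by linarith)
      have h2 := hkey (x / 2) ⟨half_pos hx0, by linarith [hx.2]⟩
      linarith
    have hfx_gt : a ^ 2 < f x := by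
      rw [← hfa]
      exact hanti ⟨hx0, hx.2.le⟩ ⟨ha, le_rfl⟩ hx.2
    constructor
    · rw [div_lt_div_iff₀ (by positivity) hx0]
      have h := hfx_gt
      rw [hf] at h
      rw [lt_div_iff₀ hxS] at h
      nlinarith [h]
    · have h12 : 0 < 12 - d * x ^ 2 := by
        have : 0 ≤ (-d) * x ^ 2 := mul_nonneg (by linarith) (sq_nonneg x)
        nlinarith
      rw [div_lt_div_iff₀ hx0 h12]
      have h := hfx_lt
      rw [hf] at h
      rw [div_lt_div_iff₀ hxS he0] at h
      have hde : d = -e := by rw [he]; ring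
      rw [hde]
      nlinarith [h]
end

section
/- For all x ∈ (0, π), (π² − x²)/(π² + x²) < cos(x/2). -/
open Real

/-- Redheffer-type inequality for the cosine:
`(π² − x²)/(π² + x²) < cos(x/2)` for all `x ∈ (0, π)`. -/
theorem redheffer_cos (x : ℝ) (hx : x ∈ Set.Ioo 0 π) :
    (π ^ 2 - x ^ 2) / (π ^ 2 + x ^ 2) < Real.cos (x / 2) := by
  obtain ⟨hx0, hxπ⟩ := hx
  have hπ1 : (3.141592 : ℝ) < π := Real.pi_gt_d6
  have hπ2 : π < 3.141593 := Real.pi_lt_d6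
  have hπsq : π ^ 2 < 9.8697 := by nlinarith
  have hπsq' : (9.8695:ℝ) < π ^ 2 := by nlinarith
  have hden : (0:ℝ) < π ^ 2 + x ^ 2 := by positivity
  rw [div_lt_iff₀ hden]
  rcases le_or_gt x 2 with h2 | h2
  · -- small x : use cos bound
    have hy : |x / 2| ≤ 1 := by rw [abs_of_pos (by linarith)]; linarith
    have hb := Real.cos_bound hy
    rw [abs_of_pos (by linarith : (0:ℝ) < x / 2)] at hb
    have hlb : 1 - (x/2)^2/2 - (x/2)^4 * (5/96) ≤ Real.cos (x/2) := by
      have := abs_le.mp hb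
      linarith [this.1]
    have hx2 : x ^ 2 ≤ 4 := by nlinarith
    have hbr : (0:ℝ) < 2 - π^2/8 - x^2/8 - 5*x^2*π^2/1536 - 5*(x^2)^2/1536 := by
      nlinarith [sq_nonneg x, mul_nonneg (sq_nonneg x) (sq_nonneg π),
        mul_le_mul hx2 hπsq.le (sq_nonneg π) (by norm_num : (0:ℝ) ≤ 4)]
    have hxx : 0 < x ^ 2 := by positivity
    have key : π ^ 2 - x ^ 2 < (1 - (x/2)^2/2 - (x/2)^4 * (5/96)) * (π ^ 2 + x ^ 2) := by
      nlinarith [mul_pos hxx hbr]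
    calc π ^ 2 - x ^ 2 < (1 - (x/2)^2/2 - (x/2)^4 * (5/96)) * (π ^ 2 + x ^ 2) := key
      _ ≤ Real.cos (x/2) * (π ^ 2 + x ^ 2) := by
          exact mul_le_mul_of_nonneg_right hlb hden.le
  · -- large x : use sin lower bound at t = (π - x)/2
    set t := (π - x) / 2 with ht
    have ht0 : 0 < t := by rw [ht]; linarith
    have ht1 : t < 0.5708 := by rw [ht]; linarith
    have hsin : t - t ^ 3 / 4 < Real.sin t := by
      have := Real.sin_gt_sub_cube ht0; linarith [pow_pos ht0 3]
    have hcs : Real.cos (x / 2) = Real.sin t := by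
      rw [ht, show (π - x)/2 = π/2 - x/2 by ring, Real.sin_pi_div_two_sub]
    rw [hcs]
    have hx' : x = π - 2*t := by rw [ht]; ring
    have hbr : 4*π - 4*t < (1 - t^2/4) * (2*π^2 - 4*π*t + 4*t^2) := by
      nlinarith [sq_nonneg t, mul_pos ht0 ht0, sq_nonneg (π - 2*t),
        mul_le_mul ht1.le hπ2.le (by linarith) (by norm_num : (0:ℝ) ≤ 0.5708),
        mul_pos ht0 (mul_pos ht0 ht0)]
    have key : π ^ 2 - x ^ 2 < (t - t^3/4) * (π ^ 2 + x ^ 2) := by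
      rw [hx']
      nlinarith [mul_pos ht0 (sub_pos.mpr hbr)]
    calc π ^ 2 - x ^ 2 < (t - t^3/4) * (π ^ 2 + x ^ 2) := key
      _ ≤ Real.sin t * (π ^ 2 + x ^ 2) :=
          mul_le_mul_of_nonneg_right hsin.le hden.le
end

section
/- Let 2 ≤ q < ∞ and q* := q/(q−1). Then π_{2,q} = 2^{2/q − 1} · π_{q*,q}. -/
open Real Set

/-- `F_{p,q}(x) = ∫₀ˣ (1 - t^q)^{-1/p} dt`. -/
noncomputable def genF (p q : ℝ) (x : ℝ) : ℝ :=
  ∫ t in (0:ℝ)..x, (1 - t ^ q) ^ (-(1 / p))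

/-- The generalized π: `π_{p,q} = 2 F_{p,q}(1)`. -/
noncomputable def genPi (p q : ℝ) : ℝ := 2 * genF p q 1

/-- The inverse function of `F_{p,q} : [0,1] → [0, π_{p,q}/2]`;
for `x ∈ [0, π_{p,q}/2]` this is exactly `F_{p,q}⁻¹(x)` since `F_{p,q}`
is a continuous strictly increasing bijection of `[0,1]` onto `[0, π_{p,q}/2]`. -/
noncomputable def sinBase (p q : ℝ) (x : ℝ) : ℝ :=
  sSup {s : ℝ | s ∈ Icc (0:ℝ) 1 ∧ genF p q s ≤ x}

/-- `sin_{p,q}` on `[0, π_{p,q}]`: equals `F_{p,q}⁻¹` on `[0, π_{p,q}/2]` and is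
extended to `(π_{p,q}/2, π_{p,q}]` by `sin_{p,q}(π_{p,q} - x)`. -/
noncomputable def sinHalf (p q : ℝ) (x : ℝ) : ℝ :=
  if x ≤ genPi p q / 2 then sinBase p q x else sinBase p q (genPi p q - x)

/-- `sin_{p,q}` on all of `ℝ`: the odd `2π_{p,q}`-periodic continuation. -/
noncomputable def genSin (p q : ℝ) (x : ℝ) : ℝ :=
  let a := genPi p q
  let y := x - 2 * a * (⌊x / (2 * a)⌋ : ℝ)
  if y ≤ a then sinHalf p q y else -(sinHalf p q (2 * a - y))

/-- `cos_{p,q} x = (sin_{p,q} x)'`. -/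
noncomputable def genCos (p q : ℝ) (x : ℝ) : ℝ := deriv (genSin p q) x

open MeasureTheory in

lemma real_beta (a b : ℝ) (ha : 0 < a) (hb : 0 < b) :
    ∫ x in (0:ℝ)..1, x ^ (a - 1) * (1 - x) ^ (b - 1) =
      Real.Gamma a * Real.Gamma b / Real.Gamma (a + b) := by
  have hB : Complex.betaIntegral a b =
      ((∫ x in (0:ℝ)..1, x ^ (a - 1) * (1 - x) ^ (b - 1) : ℝ) : ℂ) := by
    rw [← intervalIntegral.integral_ofReal, Complex.betaIntegral]
    refine intervalIntegral.integral_congr fun x hx => ?_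
    rw [uIcc_of_le zero_le_one] at hx
    push_cast
    rw [Complex.ofReal_cpow hx.1, Complex.ofReal_cpow (by linarith [hx.2] : (0:ℝ) ≤ 1 - x)]
    push_cast
    ring
  have h := Complex.Gamma_mul_Gamma_eq_betaIntegral (s := (a:ℂ)) (t := (b:ℂ))
    (by simpa using ha) (by simpa using hb)
  rw [hB, ← Complex.ofReal_add, Complex.Gamma_ofReal, Complex.Gamma_ofReal, Complex.Gamma_ofReal,
    ← Complex.ofReal_mul, ← Complex.ofReal_mul, Complex.ofReal_inj] at h
  have hab : Real.Gamma (a + b) ≠ 0 := (Real.Gamma_pos_of_pos (by linarith)).ne'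
  rw [eq_div_iff hab]
  linear_combination -h

lemma subst_rpow (q c : ℝ) (hq : 0 < q) :
    ∫ u in Ioo (0:ℝ) 1, u ^ (1/q - 1) * (1 - u) ^ c =
      q * ∫ t in Ioo (0:ℝ) 1, (1 - t ^ q) ^ c := by
  have himg : (fun t : ℝ => t ^ q) '' Ioo 0 1 = Ioo 0 1 := by
    ext u
    constructor
    · rintro ⟨t, ⟨ht0, ht1⟩, rfl⟩
      exact ⟨Real.rpow_pos_of_pos ht0 q, Real.rpow_lt_one ht0.le ht1 hq⟩
    · rintro ⟨hu0, hu1⟩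
      refine ⟨u ^ (1/q), ⟨Real.rpow_pos_of_pos hu0 _,
        Real.rpow_lt_one hu0.le hu1 (by positivity)⟩, ?_⟩
      show (u ^ (1/q)) ^ q = u
      rw [← Real.rpow_mul hu0.le, one_div, inv_mul_cancel₀ hq.ne', Real.rpow_one]
  have hderiv : ∀ t ∈ Ioo (0:ℝ) 1, HasDerivWithinAt (fun t : ℝ => t ^ q)
      (q * t ^ (q - 1)) (Ioo 0 1) t := fun t ht =>
    (Real.hasDerivAt_rpow_const (Or.inl ht.1.ne')).hasDerivWithinAt
  have hmono : StrictMonoOn (fun t : ℝ => t ^ q) (Ioo (0:ℝ) 1) := fun x hx y hy hxy =>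
    Real.rpow_lt_rpow hx.1.le hxy hq
  calc ∫ u in Ioo (0:ℝ) 1, u ^ (1/q-1) * (1-u) ^ c
      = ∫ u in (fun t : ℝ => t ^ q) '' Ioo 0 1, u ^ (1/q-1) * (1-u) ^ c := by rw [himg]
    _ = ∫ t in Ioo (0:ℝ) 1, |q * t ^ (q-1)| • ((t^q) ^ (1/q-1) * (1 - t^q) ^ c) :=
        MeasureTheory.integral_image_eq_integral_abs_deriv_smul measurableSet_Ioo hderiv hmono.injOn _
    _ = ∫ t in Ioo (0:ℝ) 1, q * (1 - t^q) ^ c := by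
        refine MeasureTheory.setIntegral_congr_fun measurableSet_Ioo fun t ht => ?_
        have ht0 := ht.1
        have h1 : (t ^ q) ^ (1/q - 1) = t ^ (1 - q) := by
          rw [← Real.rpow_mul ht0.le, mul_sub, mul_one_div, div_self hq.ne', mul_one]
        rw [smul_eq_mul, h1, abs_of_nonneg (by positivity)]
        have h2 : t ^ (q-1) * t ^ (1-q) = 1 := by
          rw [← Real.rpow_add ht0]; norm_num
        calc q * t^(q-1) * (t^(1-q) * (1-t^q)^c) = q * (t^(q-1)*t^(1-q)) * (1-t^q)^c := by ring
          _ = q * (1-t^q)^c := by rw [h2]; ring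
    _ = q * ∫ t in Ioo (0:ℝ) 1, (1 - t^q) ^ c := MeasureTheory.integral_const_mul _ _

open MeasureTheory in
lemma genF_eq (p q : ℝ) (hq : 0 < q) (hp : 0 < 1 - 1/p) :
    genF p q 1 =
      (1/q) * (Real.Gamma (1/q) * Real.Gamma (1 - 1/p) / Real.Gamma (1/q + (1 - 1/p))) := by
  have ha : 0 < 1/q := by positivity
  have hbeta := real_beta (1/q) (1 - 1/p) ha hp
  rw [intervalIntegral.integral_of_le zero_le_one,
    MeasureTheory.integral_Ioc_eq_integral_Ioo] at hbeta
  have he : (1 - 1/p) - 1 = -(1/p) := by ring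
  rw [he] at hbeta
  have hsub := subst_rpow q (-(1/p)) hq
  unfold genF
  rw [intervalIntegral.integral_of_le zero_le_one, MeasureTheory.integral_Ioc_eq_integral_Ioo,
    ← hbeta, hsub, ← mul_assoc, one_div q, inv_mul_cancel₀ hq.ne', one_mul]


/-- For `2 ≤ q < ∞` and `q* = q/(q−1)`, one has `π_{2,q} = 2^{2/q − 1} π_{q*,q}`. -/
theorem genPi_two_eq (q : ℝ) (hq : 2 ≤ q) :
    genPi 2 q = 2 ^ (2 / q - 1) * genPi (q / (q - 1)) q := by
  have hq0 : 0 < q := by linarith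
  have hq1 : q - 1 ≠ 0 := by intro h; nlinarith
  have h2 : genF 2 q 1 =
      (1/q) * (Real.Gamma (1/q) * Real.Gamma (1/2) / Real.Gamma (1/q + 1/2)) := by
    have := genF_eq 2 q hq0 (by norm_num)
    norm_num at this ⊢
    convert this using 4 <;> norm_num
  have hkey : 1 - 1/(q/(q-1)) = 1/q := by
    rw [one_div_div]; field_simp; ring
  have hs : genF (q/(q-1)) q 1 =
      (1/q) * (Real.Gamma (1/q) * Real.Gamma (1/q) / Real.Gamma (1/q + 1/q)) := by
    have := genF_eq (q/(q-1)) q hq0 (by rw [hkey]; positivity)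
    rwa [hkey] at this
  have hd := Real.Gamma_mul_Gamma_add_half (1/q)
  have hGa : 0 < Real.Gamma (1/q) := Real.Gamma_pos_of_pos (by positivity)
  have hGah : 0 < Real.Gamma (1/q + 1/2) := Real.Gamma_pos_of_pos (by positivity)
  have hG2a : 0 < Real.Gamma (1/q + 1/q) := Real.Gamma_pos_of_pos (by positivity)
  have h2a : Real.Gamma (2 * (1/q)) = Real.Gamma (1/q + 1/q) := by ring_nf
  rw [h2a] at hd
  have hhalf : Real.Gamma (1/2) = Real.sqrt π := Real.Gamma_one_half_eq
  have hpow : (2:ℝ) ^ (2/q - 1) * 2 ^ (1 - 2 * (1/q)) = 1 := by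
    rw [← Real.rpow_add two_pos]
    have : 2/q - 1 + (1 - 2 * (1/q)) = 0 := by ring
    rw [this, Real.rpow_zero]
  have hsq : 0 < Real.sqrt π := Real.sqrt_pos.mpr pi_pos
  have key : Real.Gamma (1/q) * Real.sqrt π * Real.Gamma (1/q + 1/q) =
      2 ^ (2/q - 1) * (Real.Gamma (1/q) * Real.Gamma (1/q)) * Real.Gamma (1/q + 1/2) := by
    calc Real.Gamma (1/q) * Real.sqrt π * Real.Gamma (1/q + 1/q)
        = ((2:ℝ) ^ (2/q - 1) * 2 ^ (1 - 2 * (1/q))) *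
          (Real.Gamma (1/q) * Real.sqrt π * Real.Gamma (1/q + 1/q)) := by rw [hpow, one_mul]
      _ = 2 ^ (2/q - 1) * Real.Gamma (1/q) *
          (Real.Gamma (1/q + 1/q) * 2 ^ (1 - 2 * (1/q)) * Real.sqrt π) := by ring
      _ = 2 ^ (2/q - 1) * Real.Gamma (1/q) * (Real.Gamma (1/q) * Real.Gamma (1/q + 1/2)) := by
          rw [← hd]
      _ = 2 ^ (2/q - 1) * (Real.Gamma (1/q) * Real.Gamma (1/q)) * Real.Gamma (1/q + 1/2) := by
          ring
  have hAB : Real.Gamma (1/q) * Real.sqrt π / Real.Gamma (1/q + 1/2) =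
      2 ^ (2/q - 1) * (Real.Gamma (1/q) * Real.Gamma (1/q)) / Real.Gamma (1/q + 1/q) := by
    rw [div_eq_div_iff hGah.ne' hG2a.ne']
    linear_combination key
  unfold genPi
  rw [h2, hs, hhalf, hAB]
  ring
end
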